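/- arXiv:0911.3926 — 3 statements merged into one kernel-verified Lean document; each statement's English description precedes it below -/
import Mathlib

section
/- Let N be a group and let {1} = N₀ ≤ N₁ ≤ ⋯ ≤ N_m = N be a finite chain of subgroups such that for each j = 1, …, m the subgroup N_{j-1} is normal in N_j and the quotient group N_j / N_{j-1} is finitely generated and abelian. Let H be a subgroup of N and let f be an automorphism of N such that f(H) ≤ H and f(N_j) = N_j for each j = 0, 1, …, m. Then f(H) = H. (Lemma 9.1 of the paper.) -/
/-- In a finitely generated group whose multiplication is commutative, any automorphism
mapping a subgroup into itself maps it onto itself. -/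
private lemma aux_fg_comm_stab {Q : Type*} [Group Q] (hc : ∀ a b : Q, a * b = b * a)
    (hfg : Group.FG Q) (φ : MulAut Q) (L : Subgroup Q)
    (hL : L.map φ.toMonoidHom ≤ L) : L.map φ.toMonoidHom = L := by
  letI cQ : CommGroup Q := { (inferInstance : Group Q) with mul_comm := hc }
  haveI : AddGroup.FG (Additive Q) := GroupFG.iff_add_fg.1 hfg
  haveI : Module.Finite ℤ (Additive Q) := Module.Finite.iff_addGroup_fg.2 ‹_›
  haveI : IsNoetherian ℤ (Additive Q) := isNoetherian_of_isNoetherianRing_of_finite ℤ _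
  have hle : L ≤ L.comap φ.toMonoidHom := (Subgroup.map_le_iff_le_comap).1 hL
  have hmono : ∀ n : ℕ, L.comap (φ ^ n).toMonoidHom ≤ L.comap (φ ^ (n + 1)).toMonoidHom := by
    intro n
    have h1 : (φ ^ (n + 1)).toMonoidHom = φ.toMonoidHom.comp (φ ^ n).toMonoidHom := by
      ext x
      simp [pow_succ']
    rw [h1, ← Subgroup.comap_comap]
    exact Subgroup.comap_mono hle
  let c : ℕ →o Submodule ℤ (Additive Q) :=
    ⟨fun n => AddSubgroup.toIntSubmodule
        (Subgroup.toAddSubgroup (L.comap (φ ^ n).toMonoidHom)),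
      monotone_nat_of_le_succ fun n =>
        AddSubgroup.toIntSubmodule.monotone (Subgroup.toAddSubgroup.monotone (hmono n))⟩
  obtain ⟨n, hn⟩ := (monotone_stabilizes_iff_noetherian.2 ‹_›) c
  have hcn : c n = c (n + 1) := hn (n + 1) (Nat.le_succ n)
  have hsub : L.comap (φ ^ n).toMonoidHom = L.comap (φ ^ (n + 1)).toMonoidHom :=
    Subgroup.toAddSubgroup.injective (AddSubgroup.toIntSubmodule.injective hcn)
  have h1 : (φ ^ (n + 1)).toMonoidHom = φ.toMonoidHom.comp (φ ^ n).toMonoidHom := by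
    ext x; simp [pow_succ']
  rw [h1, ← Subgroup.comap_comap] at hsub
  have hsurjn : Function.Surjective (φ ^ n).toMonoidHom := (φ ^ n).surjective
  have hLeq : L = L.comap φ.toMonoidHom := Subgroup.comap_injective hsurjn hsub
  calc L.map φ.toMonoidHom = (L.comap φ.toMonoidHom).map φ.toMonoidHom := by rw [← hLeq]
    _ = L := Subgroup.map_comap_eq_self_of_surjective φ.surjective L

/-- The inductive step. -/
private lemma aux_step {G : Type*} [Group G] (A B : Subgroup G) (hAB : A ≤ B)
    (hnorm : ∀ x ∈ B, ∀ y ∈ A, x * y * x⁻¹ ∈ A)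
    (hab : ∀ x ∈ B, ∀ y ∈ B, x * y * x⁻¹ * y⁻¹ ∈ A)
    (hfg : ∃ F : Finset G, (F : Set G) ⊆ (B : Set G) ∧
      Subgroup.closure ((F : Set G) ∪ (A : Set G)) = B)
    (f : G ≃* G) (hA : A.map f.toMonoidHom = A) (hB : B.map f.toMonoidHom = B)
    (K : Subgroup G) (hKB : K ≤ B) (hK : K.map f.toMonoidHom ≤ K)
    (hKA : (K ⊓ A).map f.toMonoidHom = K ⊓ A) :
    K.map f.toMonoidHom = K := by
  haveI hnormal : (A.subgroupOf B).Normal := by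
    constructor
    intro n hn g
    have : (g : G) * (n : G) * (g : G)⁻¹ ∈ A := hnorm g g.2 n hn
    simpa [Subgroup.mem_subgroupOf] using this
  set A' := A.subgroupOf B with hA'
  -- commutativity of the quotient
  have hc : ∀ a b : B ⧸ A', a * b = b * a := by
    intro a b
    induction a using QuotientGroup.induction_on with
    | H x =>
      induction b using QuotientGroup.induction_on with
      | H y =>
        show QuotientGroup.mk (x * y) = QuotientGroup.mk (y * x)
        rw [QuotientGroup.eq]
        have : (y : G)⁻¹ * (x : G)⁻¹ * ((y : G)⁻¹)⁻¹ * ((x : G)⁻¹)⁻¹ ∈ A :=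
          hab _ (B.inv_mem y.2) _ (B.inv_mem x.2)
        have h2 : (x * y : B)⁻¹ * (y * x) ∈ A' := by
          simp only [hA', Subgroup.mem_subgroupOf]
          have heq : (((x * y : B)⁻¹ * (y * x) : B) : G)
              = (y : G)⁻¹ * (x : G)⁻¹ * ((y : G)⁻¹)⁻¹ * ((x : G)⁻¹)⁻¹ := by
            push_cast; group
          rw [heq]; exact this
        exact h2
  -- finite generation of the quotient
  obtain ⟨F, hFB, hclos⟩ := hfg
  have hfgQ : Group.FG (B ⧸ A') := by
    rw [Group.fg_iff]
    refine ⟨⇑(QuotientGroup.mk' A') '' (((↑) : B → G) ⁻¹' (F : Set G)), ?_, ?_⟩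
    · -- the full preimage generates B
      have htop : Subgroup.closure (((↑) : B → G) ⁻¹' ((F : Set G) ∪ (A : Set G))) = ⊤ := by
        subst hclos
        exact Subgroup.closure_closure_coe_preimage
      have hmapped : Subgroup.closure (⇑(QuotientGroup.mk' A') ''
          (((↑) : B → G) ⁻¹' ((F : Set G) ∪ (A : Set G)))) = ⊤ := by
        rw [← MonoidHom.map_closure (QuotientGroup.mk' A'), htop]
        exact Subgroup.map_top_of_surjective _ (QuotientGroup.mk'_surjective A')
      have himg : ⇑(QuotientGroup.mk' A') ''
            (((↑) : B → G) ⁻¹' ((F : Set G) ∪ (A : Set G)))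
          ⊆ (⇑(QuotientGroup.mk' A') '' (((↑) : B → G) ⁻¹' (F : Set G))) ∪ {1} := by
        rintro q ⟨x, hx, rfl⟩
        rcases hx with hx | hx
        · exact Or.inl ⟨x, hx, rfl⟩
        · right
          have : x ∈ A' := hx
          simp only [Set.mem_singleton_iff]
          exact (QuotientGroup.eq_one_iff x).2 this
      refine le_antisymm le_top ?_
      rw [← hmapped]
      refine (Subgroup.closure_le _).2 ?_
      intro q hq
      rcases himg hq with h | h
      · exact Subgroup.subset_closure h
      · simp only [Set.mem_singleton_iff] at h
        rw [h]; exact Subgroup.one_mem _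
    · exact ((F.finite_toSet).preimage (Subtype.coe_injective.injOn)).image _
  -- the induced automorphism of B
  let e : B ≃* B := (f.subgroupMap B).trans (MulEquiv.subgroupCongr hB)
  have he_apply : ∀ x : B, ((e x : B) : G) = f x := fun x => rfl
  have he : A'.map e.toMonoidHom = A' := by
    apply le_antisymm
    · rintro x ⟨a, ha, rfl⟩
      have ha' : (a : G) ∈ A := ha
      have : f a ∈ A := by
        rw [← hA]; exact ⟨a, ha', rfl⟩
      simpa [hA', Subgroup.mem_subgroupOf, he_apply] using this
    · intro x hx
      have hx' : (x : G) ∈ A := hx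
      have : (x : G) ∈ A.map f.toMonoidHom := by rw [hA]; exact hx'
      obtain ⟨a, haA, hfa⟩ := this
      have haB : a ∈ B := hAB haA
      refine ⟨⟨a, haB⟩, ?_, ?_⟩
      · simpa [hA', Subgroup.mem_subgroupOf] using haA
      · apply Subtype.ext
        show f a = (x : G)
        exact hfa
  let φ : MulAut (B ⧸ A') := QuotientGroup.congr A' A' e he
  set L : Subgroup (B ⧸ A') := (K.subgroupOf B).map (QuotientGroup.mk' A') with hL
  have hφL : L.map φ.toMonoidHom ≤ L := by
    rintro q ⟨q', hq', rfl⟩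
    obtain ⟨x, hx, rfl⟩ := hq'
    have hxK : (x : G) ∈ K := hx
    refine ⟨e x, ?_, rfl⟩
    have : ((e x : B) : G) ∈ K := by
      rw [he_apply]
      exact hK ⟨x, hxK, rfl⟩
    exact this
  have hLeq : L.map φ.toMonoidHom = L := aux_fg_comm_stab hc hfgQ φ L hφL
  apply le_antisymm hK
  intro k hk
  have hkB : k ∈ B := hKB hk
  have hqL : QuotientGroup.mk' A' ⟨k, hkB⟩ ∈ L := ⟨⟨k, hkB⟩, hk, rfl⟩
  rw [← hLeq] at hqL
  obtain ⟨q', hq', hEq⟩ := hqL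
  obtain ⟨x, hx, rfl⟩ := hq'
  have hxK : (x : G) ∈ K := hx
  have hEq' : QuotientGroup.mk (e x) = QuotientGroup.mk (⟨k, hkB⟩ : B) := hEq
  rw [QuotientGroup.eq] at hEq'
  have hnA : ((e x : B)⁻¹ * ⟨k, hkB⟩ : B) ∈ A' := hEq'
  have hnA' : (f x)⁻¹ * k ∈ A := by
    have : (((e x : B)⁻¹ * (⟨k, hkB⟩ : B) : B) : G) = (f x)⁻¹ * k := by
      push_cast [he_apply]; rfl
    rw [Subgroup.mem_subgroupOf, this] at hnA
    exact hnA
  have hfxK : f x ∈ K := hK ⟨x, hxK, rfl⟩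
  have hnK : (f x)⁻¹ * k ∈ K := K.mul_mem (K.inv_mem hfxK) hk
  have : (f x)⁻¹ * k ∈ (K ⊓ A).map f.toMonoidHom := by
    rw [hKA]; exact ⟨hnK, hnA'⟩
  obtain ⟨a, haKA, hfa⟩ := this
  refine ⟨(x : G) * a, K.mul_mem hxK haKA.1, ?_⟩
  rw [map_mul, hfa]
  exact mul_inv_cancel_left _ _

/-- Lemma 9.1: Let `N` be a group with a finite chain of subgroups
`{1} = N₀ ≤ N₁ ≤ ⋯ ≤ N_m = N` such that each `N_{j-1}` is normal in `N_j` with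
finitely generated abelian quotient. If `H ≤ N` and `f` is an automorphism of `N`
with `f(H) ≤ H` and `f(N_j) = N_j` for all `j`, then `f(H) = H`. -/
theorem stmt0 {G : Type*} [Group G] (m : ℕ) (N : ℕ → Subgroup G)
    (h0 : N 0 = ⊥) (hm : N m = ⊤)
    (hchain : ∀ j, 1 ≤ j → j ≤ m → N (j - 1) ≤ N j)
    (hnormal : ∀ j, 1 ≤ j → j ≤ m →
      ∀ x ∈ N j, ∀ y ∈ N (j - 1), x * y * x⁻¹ ∈ N (j - 1))
    (habelian : ∀ j, 1 ≤ j → j ≤ m →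
      ∀ x ∈ N j, ∀ y ∈ N j, x * y * x⁻¹ * y⁻¹ ∈ N (j - 1))
    (hfg : ∀ j, 1 ≤ j → j ≤ m → ∃ F : Finset G, (F : Set G) ⊆ (N j : Set G) ∧
      Subgroup.closure ((F : Set G) ∪ (N (j - 1) : Set G)) = N j)
    (H : Subgroup G) (f : G ≃* G)
    (hH : H.map f.toMonoidHom ≤ H)
    (hN : ∀ j, j ≤ m → (N j).map f.toMonoidHom = N j) :
    H.map f.toMonoidHom = H := by
  have key : ∀ j, j ≤ m → ∀ K : Subgroup G, K ≤ N j → K.map f.toMonoidHom ≤ K →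
      K.map f.toMonoidHom = K := by
    intro j
    induction j with
    | zero =>
      intro _ K hK _
      have hKbot : K = ⊥ := le_bot_iff.mp (h0 ▸ hK)
      subst hKbot
      simp
    | succ j ih =>
      intro hj K hKB hK
      have hj' : j ≤ m := Nat.le_of_succ_le hj
      have h1 : 1 ≤ j + 1 := Nat.succ_le_succ (Nat.zero_le _)
      have hKA : (K ⊓ N j).map f.toMonoidHom = K ⊓ N j := by
        apply ih hj' (K ⊓ N j) inf_le_right
        rw [Subgroup.map_inf _ _ _ f.injective, hN j hj']
        exact inf_le_inf hK le_rfl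
      exact aux_step (N j) (N (j + 1)) (hchain (j + 1) h1 hj) (hnormal (j + 1) h1 hj)
        (habelian (j + 1) h1 hj) (hfg (j + 1) h1 hj) f (hN j hj') (hN (j + 1) hj)
        K hKB hK hKA
  exact key m le_rfl H (hm ▸ le_top) hH
end

section
/- Let L be the bi-infinite line graph, i.e., the simple graph on vertex set ℤ in which two integers m and n are adjacent if and only if |m − n| = 1. Let B be a simple graph on a vertex type β, and let S be a proper subset of the vertices of B (so there exists a vertex of B not in S) such that the induced subgraph of B on S is isomorphic to L. Then there exists no injective graph homomorphism from B to L. (Abstract core of Lemma 4.10 of the paper: combining Proposition 4.6 and Lemma 4.7, there is no injective simplicial map from the graph 𝓑 into the graph 𝓖.) -/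
/-- The bi-infinite line graph on `ℤ`: `m` and `n` are adjacent iff `|m - n| = 1`. -/
def biInfiniteLine : SimpleGraph ℤ where
  Adj m n := |m - n| = 1
  symm := by
    constructor
    intro m n h
    rwa [abs_sub_comm]
  loopless := by
    constructor
    intro m h
    simp at h

/-- If `B` is a simple graph, `S` is a proper subset of the vertices of `B`, and the
induced subgraph of `B` on `S` is isomorphic to the bi-infinite line, then there is no
injective graph homomorphism from `B` to the bi-infinite line. -/
theorem stmt3 {β : Type*} (B : SimpleGraph β) (S : Set β)
    (hS : ∃ v, v ∉ S)
    (hiso : Nonempty ((SimpleGraph.induce S B) ≃g biInfiniteLine)) :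
    ¬ ∃ f : B →g biInfiniteLine, Function.Injective f := by
  rintro ⟨f, hf⟩
  obtain ⟨v, hv⟩ := hS
  obtain ⟨e⟩ := hiso
  set g : ℤ → ℤ := fun n => f ((e.symm n : S) : β) with hg
  have hginj : Function.Injective g := by
    intro a b h
    have h1 : ((e.symm a : S) : β) = ((e.symm b : S) : β) := hf h
    exact e.symm.injective (Subtype.coe_injective h1)
  have hadj : ∀ m n : ℤ, biInfiniteLine.Adj m n → biInfiniteLine.Adj (g m) (g n) := by
    intro m n h
    have h2 : (SimpleGraph.induce S B).Adj (e.symm m) (e.symm n) := e.symm.map_rel_iff.mpr h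
    exact f.map_adj h2
  have hstep : ∀ n : ℤ, |g (n + 1) - g n| = 1 := by
    intro n
    have : biInfiniteLine.Adj (n + 1) n := by
      show |(n + 1) - n| = 1
      simp
    exact hadj _ _ this
  have hdc : ∀ n : ℤ, g (n + 1) - g n = g 1 - g 0 := by
    have key : ∀ n : ℤ, g (n + 1 + 1) - g (n + 1) = g (n + 1) - g n := by
      intro n
      have h1 := hstep n
      have h2 := hstep (n + 1)
      rcases abs_eq (by norm_num : (0:ℤ) ≤ 1) |>.mp h1 with ha | ha <;>
        rcases abs_eq (by norm_num : (0:ℤ) ≤ 1) |>.mp h2 with hb | hb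
      · omega
      · exfalso
        have : g (n + 1 + 1) = g n := by omega
        have := hginj this
        omega
      · exfalso
        have : g (n + 1 + 1) = g n := by omega
        have := hginj this
        omega
      · omega
    intro n
    induction n using Int.induction_on with
    | zero => rfl
    | succ k ih => rw [key k]; exact ih
    | pred k ih =>
      have hkey := key (-(k : ℤ) - 1)
      simp only [show (-(k:ℤ) - 1 + 1 + 1) = -(k:ℤ) + 1 from by ring,
        show (-(k:ℤ) - 1 + 1) = -(k:ℤ) from by ring] at hkey
      simp only [show (-(k:ℤ) - 1 + 1) = -(k:ℤ) from by ring]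
      omega
  set ε : ℤ := g 1 - g 0 with hε
  have hεone : |ε| = 1 := by simpa using hstep 0
  have hform : ∀ n : ℤ, g n = g 0 + ε * n := by
    intro n
    induction n using Int.induction_on with
    | zero => simp
    | succ k ih =>
      have hd := hdc k
      have h3 : ε * ((k:ℤ) + 1) = ε * (k:ℤ) + ε := by ring
      linarith
    | pred k ih =>
      have hd := hdc (-(k : ℤ) - 1)
      simp only [show (-(k:ℤ) - 1 + 1) = -(k:ℤ) from by ring] at hd
      have h3 : ε * (-(k:ℤ) - 1) = ε * (-(k:ℤ)) - ε := by ring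
      linarith
  have hsurj : ∀ t : ℤ, ∃ n, g n = t := by
    intro t
    refine ⟨ε * (t - g 0), ?_⟩
    rw [hform]
    have : ε = 1 ∨ ε = -1 := abs_eq (by norm_num : (0:ℤ) ≤ 1) |>.mp hεone
    rcases this with h | h <;> rw [h] <;> ring
  obtain ⟨n, hn⟩ := hsurj (f v)
  have : ((e.symm n : S) : β) = v := hf hn
  rw [← this] at hv
  exact hv (e.symm n).2
end

section
/- Let G be a simple graph with vertex set V, let v₀ ∈ V, and let f : V → V be a map satisfying: (i) f(v₀) = v₀; (ii) for every vertex v, either f(v) = v or f(v) is adjacent to v; (iii) for every edge {u, v} of G, either f(u) = v or f(v) = u; (iv) for every vertex v there exists a natural number n with fⁿ(v) = v₀, where fⁿ denotes the n-fold iterate of f. Then G is a tree, i.e., G is connected and contains no cycle. (Abstract core of the proof of Proposition 4.2 of the paper: the deformation-retraction map f constructed there forces the graph 𝓔 to be a tree.) -/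
open SimpleGraph

private lemma first_edge_mem {V : Type*} {G : SimpleGraph V} :
    ∀ {x w : V} (p : G.Walk x w), ¬ p.Nil → ∃ y, G.Adj y w ∧ s(y, w) ∈ p.edges := by
  intro x w p
  induction p with
  | nil => intro h; exact absurd SimpleGraph.Walk.Nil.nil h
  | @cons a b c hab q ih =>
    intro _
    by_cases hq : q.Nil
    · have hbc : b = c := hq.eq
      subst hbc
      exact ⟨a, hab, by simp⟩
    · obtain ⟨y, hy, hmem⟩ := ih hq
      exact ⟨y, hy, by simp [hmem]⟩

/-- Let `G` be a simple graph, `v₀` a vertex, and `f` a map on vertices such that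
`f v₀ = v₀`; every vertex `v` satisfies `f v = v` or `f v` is adjacent to `v`;
for every edge `{u, v}`, either `f u = v` or `f v = u`; and every vertex reaches
`v₀` under some iterate of `f`. Then `G` is a tree. -/
theorem stmt4 {V : Type*} (G : SimpleGraph V) (v₀ : V) (f : V → V)
    (h0 : f v₀ = v₀)
    (h1 : ∀ v, f v = v ∨ G.Adj (f v) v)
    (h2 : ∀ u v, G.Adj u v → f u = v ∨ f v = u)
    (h3 : ∀ v, ∃ n : ℕ, f^[n] v = v₀) :
    G.IsTree := by
  classical
  set H : V → ℕ := fun v => Nat.find (h3 v) with hH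
  have Hspec : ∀ v, f^[H v] v = v₀ := fun v => Nat.find_spec (h3 v)
  have fix : ∀ v, f v = v → v = v₀ := by
    intro v hv
    obtain ⟨n, hn⟩ := h3 v
    rwa [Function.iterate_fixed hv] at hn
  have desc : ∀ v, v ≠ v₀ → G.Adj (f v) v ∧ H (f v) < H v := by
    intro v hv
    have hadj : G.Adj (f v) v := (h1 v).resolve_left (fun h => hv (fix v h))
    have hpos : 0 < H v := by
      rcases Nat.eq_zero_or_pos (H v) with h | h
      · exfalso; apply hv; have := Hspec v; rwa [h, Function.iterate_zero_apply] at this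
      · exact h
    have hle : H (f v) ≤ H v - 1 := by
      apply Nat.find_le
      have : f^[H v - 1 + 1] v = v₀ := by rw [Nat.sub_add_cancel hpos]; exact Hspec v
      rwa [Function.iterate_succ_apply] at this
    exact ⟨hadj, lt_of_le_of_lt hle (Nat.sub_lt hpos one_pos)⟩
  have key : ∀ u v, G.Adj u v → H v ≤ H u → f u = v := by
    intro u v hadj hle
    rcases h2 u v hadj with h | h
    · exact h
    · exfalso
      have hv : v ≠ v₀ := by
        intro hv; subst hv; rw [h0] at h; exact G.ne_of_adj hadj h.symm
      have := (desc v hv).2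
      rw [h] at this
      omega
  have reach' : ∀ n v, H v = n → G.Reachable v v₀ := by
    intro n
    induction n using Nat.strong_induction_on with
    | _ n ih =>
      intro v hn
      by_cases hv : v = v₀
      · subst hv; exact Reachable.refl _
      · obtain ⟨hadj, hlt⟩ := desc v hv
        exact (Adj.reachable hadj.symm).trans (ih (H (f v)) (hn ▸ hlt) (f v) rfl)
  have reach : ∀ v, G.Reachable v v₀ := fun v => reach' (H v) v rfl
  have : Nonempty V := ⟨v₀⟩
  have conn : G.Connected := ⟨fun u v => (reach u).trans (reach v).symm⟩
  refine ⟨conn, ?_⟩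
  intro a c hc
  obtain ⟨w, hw, hwmax⟩ := Finset.exists_max_image c.support.toFinset H
    ⟨a, by simp [Walk.start_mem_support]⟩
  rw [List.mem_toFinset] at hw
  have hwmax' : ∀ z ∈ c.support, H z ≤ H w := fun z hz =>
    hwmax z (List.mem_toFinset.mpr hz)
  -- the contradiction for any cycle based at a max-height vertex
  have main : ∀ (c' : G.Walk w w), c'.IsCycle → (∀ z ∈ c'.support, H z ≤ H w) → False := by
    intro c' hcyc hmax
    cases c' with
    | nil => simpa using hcyc.three_le_length
    | @cons _ x _ hwx p =>
      have hlen : 3 ≤ p.length + 1 := by simpa using hcyc.three_le_length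
      have hpnil : ¬ p.Nil := Walk.not_nil_iff_lt_length.mpr (by omega)
      obtain ⟨y, hyw, hmem⟩ := first_edge_mem p hpnil
      have hx : f w = x := key w x hwx (hmax x (by simp))
      have hy : f w = y := by
        refine key w y hyw.symm (hmax y ?_)
        exact List.mem_cons_of_mem _ (p.fst_mem_support_of_mem_edges hmem)
      have hxy : x = y := hx ▸ hy
      subst hxy
      have : s(w, x) ∉ p.edges := by
        have := hcyc.edges_nodup
        simp only [Walk.edges_cons, List.nodup_cons] at this
        exact this.1
      exact this (by rwa [Sym2.eq_swap])
  -- transfer maximality along rotation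
  have hsup : ∀ z ∈ (c.rotate w hw).support, H z ≤ H w := by
    intro z hz
    rw [(c.rotate w hw).support_eq_cons] at hz
    rcases List.mem_cons.mp hz with h | h
    · exact h ▸ le_refl _
    · exact hwmax' z (List.mem_of_mem_tail ((c.support_rotate w hw).mem_iff.mp h))
  exact main (c.rotate w hw) (hc.rotate hw) hsup
end
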